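/- Let A be totally unimodular with nonzero entry a_{pq}, and let B̃ be the identity matrix modified so that its p-th column has entries b̃_{ip} = -a_{iq}/a_{pq} for i ≠ p and b̃_{pp} = 1. Then B̃A is totally unimodular. -/

import Mathlib

/-- A matrix over ℚ is totally unimodular: every square submatrix has determinant 0, 1 or -1. -/
def IsTotallyUnimodular {m n : ℕ} (A : Matrix (Fin m) (Fin n) ℚ) : Prop :=
  ∀ (k : ℕ) (f : Fin k → Fin m) (g : Fin k → Fin n),
    Function.Injective f → Function.Injective g →
    (A.submatrix f g).det = 0 ∨ (A.submatrix f g).det = 1 ∨ (A.submatrix f g).det = -1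

section Aux

variable {m n : ℕ} (A : Matrix (Fin m) (Fin n) ℚ) (p : Fin m) (q : Fin n)

/-- Entrywise description of the pivoted matrix. -/
lemma pivot_entry (B : Matrix (Fin m) (Fin m) ℚ)
    (hB : B = Matrix.of fun i j =>
      if j = p then (if i = p then 1 else -(A i q) / A p q)
      else if i = j then 1 else 0) (i : Fin m) (j : Fin n) :
    (B * A) i j = if i = p then A p j else A i j - A i q / A p q * A p j := by
  subst hB
  rw [Matrix.mul_apply]
  by_cases hip : i = p
  · subst hip
    rw [Finset.sum_eq_single i]
    · simp
    · intro b _ hb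
      simp [Matrix.of_apply, Ne.symm hb, hb]
    · simp
  · rw [Finset.sum_eq_add_of_mem p i (Finset.mem_univ _) (Finset.mem_univ _)
      (fun h => hip h.symm)]
    · simp [Matrix.of_apply, hip, neg_div, neg_mul, sub_eq_neg_add, add_comm]
    · intro c _ hc
      simp only [Matrix.of_apply]
      rcases hc with ⟨hcp, hci⟩
      simp [hcp, Ne.symm hci]

/-- If `p` is among the selected rows, pivoting does not change the determinant of the
square submatrix. -/
lemma pivot_det_eq (B : Matrix (Fin m) (Fin m) ℚ)
    (hB : B = Matrix.of fun i j =>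
      if j = p then (if i = p then 1 else -(A i q) / A p q)
      else if i = j then 1 else 0)
    {k : ℕ} (f : Fin k → Fin m) (g : Fin k → Fin n)
    (hf : Function.Injective f) (i0 : Fin k) (hi0 : f i0 = p) :
    ((B * A).submatrix f g).det = (A.submatrix f g).det := by
  classical
  set c : Fin k → ℚ := fun i => if i = i0 then 0 else -(A (f i) q) / A p q with hc
  set e : Fin k → ℚ := fun j => if j = i0 then 1 else 0 with he
  have key : (B * A).submatrix f g
      = (1 + Matrix.replicateCol (Fin 1) c * Matrix.replicateRow (Fin 1) e) * (A.submatrix f g) := by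
    ext i j
    rw [Matrix.add_mul, Matrix.one_mul, Matrix.add_apply, Matrix.mul_apply]
    have hsum : ∑ x : Fin k, (Matrix.replicateCol (Fin 1) c * Matrix.replicateRow (Fin 1) e) i x
        * (A.submatrix f g) x j = c i * A p (g j) := by
      rw [Finset.sum_eq_single i0]
      · by_cases hii : i = i0 <;>
          simp [Matrix.mul_apply, Matrix.replicateCol, Matrix.replicateRow, he, hc, hi0, hii]
      · intro b _ hb
        simp [Matrix.mul_apply, Matrix.replicateCol, Matrix.replicateRow, he, hb]
      · simp
    rw [hsum, Matrix.submatrix_apply, Matrix.submatrix_apply,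
      pivot_entry A p q B hB]
    by_cases hii : i = i0
    · subst hii
      simp [hc, hi0]
    · have hfp : f i ≠ p := fun h => hii (hf (h.trans hi0.symm))
      simp only [hfp, if_false, hc, hii]
      ring
  erw [key, Matrix.det_mul, Matrix.det_one_add_replicateCol_mul_replicateRow]
  have : dotProduct e c = 0 := by
    rw [dotProduct]
    apply Finset.sum_eq_zero
    intro x _
    by_cases hx : x = i0 <;> simp [he, hc, hx]
  rw [this]
  ring

end Aux

/-- The variant pivot on a totally unimodular matrix `A` at a nonzero entry
`A p q`, pre-multiplying by the matrix `B̃` whose `p`-th column has entries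
`-A i q / A p q` for `i ≠ p` and `1` in position `(p,p)`, yields a totally unimodular
matrix `B̃ * A`. -/
theorem stmt14 {m n : ℕ} (A : Matrix (Fin m) (Fin n) ℚ)
    (hA : IsTotallyUnimodular A) (p : Fin m) (q : Fin n) (hpq : A p q ≠ 0)
    (B : Matrix (Fin m) (Fin m) ℚ)
    (hB : B = Matrix.of fun i j =>
      if j = p then (if i = p then 1 else -(A i q) / A p q)
      else if i = j then 1 else 0) :
    IsTotallyUnimodular (B * A) := by
  classical
  -- the pivot entry is ±1
  have hApq : A p q = 1 ∨ A p q = -1 := by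
    have h1 := hA 1 (fun _ => p) (fun _ => q)
      (Function.injective_of_subsingleton _) (Function.injective_of_subsingleton _)
    rw [Matrix.det_fin_one, Matrix.submatrix_apply] at h1
    rcases h1 with h | h | h
    · exact absurd h hpq
    · exact Or.inl h
    · exact Or.inr h
  intro k f g hf hg
  by_cases hp : ∃ i0, f i0 = p
  · obtain ⟨i0, hi0⟩ := hp
    rw [pivot_det_eq A p q B hB f g hf i0 hi0]
    exact hA k f g hf hg
  · push_neg at hp
    by_cases hq : ∃ j0, g j0 = q
    · -- column `q` of the submatrix is zero
      obtain ⟨j0, hj0⟩ := hq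
      left
      apply Matrix.det_eq_zero_of_column_eq_zero j0
      intro i
      rw [Matrix.submatrix_apply, pivot_entry A p q B hB, hj0]
      simp only [hp i, if_false]
      field_simp
      ring
    · push_neg at hq
      -- extend the submatrix by row `p` and column `q`
      set f' : Fin (k + 1) → Fin m := Fin.cons p f with hf'
      set g' : Fin (k + 1) → Fin n := Fin.cons q g with hg'
      have hf'inj : Function.Injective f' :=
        Fin.cons_injective_of_injective (by rintro ⟨i, hi⟩; exact hp i hi) hf
      have hg'inj : Function.Injective g' :=
        Fin.cons_injective_of_injective (by rintro ⟨j, hj⟩; exact hq j hj) hg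
      have hbig := pivot_det_eq A p q B hB f' g' hf'inj 0 (Fin.cons_zero _ _)
      -- compute the big determinant via expansion along the first column
      have hexp : ((B * A).submatrix f' g').det = A p q * ((B * A).submatrix f g).det := by
        rw [Matrix.det_succ_column_zero]
        rw [Finset.sum_eq_single (0 : Fin (k + 1))]
        · have h00 : ((B * A).submatrix f' g') 0 0 = A p q := by
            rw [Matrix.submatrix_apply, hf', hg', Fin.cons_zero, Fin.cons_zero,
              pivot_entry A p q B hB]
            simp
          have hsub : ((B * A).submatrix f' g').submatrix (Fin.succAbove 0) Fin.succ
              = (B * A).submatrix f g := by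
            ext i j
            simp [hf', hg', Fin.succAbove, Matrix.submatrix_apply]
          rw [h00, hsub]
          simp
        · intro b _ hb
          obtain ⟨i, rfl⟩ := Fin.eq_succ_of_ne_zero hb
          have : ((B * A).submatrix f' g') i.succ 0 = 0 := by
            rw [Matrix.submatrix_apply, hf', hg', Fin.cons_succ, Fin.cons_zero,
              pivot_entry A p q B hB]
            simp only [hp i, if_false]
            field_simp
            ring
          rw [this]
          ring
        · simp
      rw [hexp] at hbig
      have hAd := hA (k + 1) f' g' hf'inj hg'inj
      rw [← hbig] at hAd
      rcases hApq with h1 | h1 <;> rw [h1] at hAd <;> rcases hAd with h | h | h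
      · left; linarith
      · right; left; linarith
      · right; right; linarith
      · left; linarith
      · right; right; linarith
      · right; left; linarith
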